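/- Let X be a complex Banach space, T a bounded linear operator on X, and x_0 ∈ X a convex-cyclic vector for T. Then for every ε > 0, every N_0 ∈ ℕ, and every x ∈ X, there exists a convex polynomial P(t) = a_0 + a_1 t + ⋯ + a_k t^k with a_k > 0 and k > N_0 such that ‖P(T)(x_0) − x‖ < ε. -/

import Mathlib

open Filter

/-- Lemma 2.2 of the paper. If `x₀` is a convex-cyclic vector for a
bounded operator `T` on a complex Banach space `X`, then for every `ε > 0`, `N₀ ∈ ℕ` and
`x ∈ X` there is a convex polynomial `P(t) = a₀ + a₁ t + ⋯ + a_k t^k` with `a_k > 0` and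
`k > N₀` such that `‖P(T)(x₀) - x‖ < ε`. -/
theorem stmt_4 {X : Type*} [NormedAddCommGroup X] [NormedSpace ℂ X] [CompleteSpace X]
    (T : X →L[ℂ] X) (x₀ : X)
    (hx₀ : Dense (convexHull ℝ (Set.range fun n : ℕ => (T ^ n) x₀)))
    (ε : ℝ) (hε : 0 < ε) (N₀ : ℕ) (x : X) :
    ∃ (k : ℕ) (a : ℕ → ℝ), N₀ < k ∧ (∀ i, 0 ≤ a i) ∧
      (∑ i ∈ Finset.range (k + 1), a i = 1) ∧ 0 < a k ∧
      ‖(∑ i ∈ Finset.range (k + 1), (a i : ℂ) • (T ^ i)) x₀ - x‖ < ε := by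
  -- get y in the convex hull near x
  obtain ⟨y, hy, hyx⟩ : ∃ y ∈ convexHull ℝ (Set.range fun n : ℕ => (T ^ n) x₀),
      ‖y - x‖ < ε := by
    obtain ⟨y, hy1, hy2⟩ := Metric.dense_iff.mp hx₀ x ε hε
    exact ⟨y, hy2, by rw [← dist_eq_norm]; exact Metric.mem_ball.mp hy1⟩
  rw [convexHull_range_eq_exists_affineCombination] at hy
  obtain ⟨s, w, hw₀, hw₁, hwy⟩ := hy
  rw [Finset.affineCombination_eq_linear_combination _ _ _ hw₁] at hwy
  -- extend weights to b on Finset.range (m+1)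
  set m : ℕ := s.sup id with hm
  set b : ℕ → ℝ := fun i => if i ∈ s then w i else 0 with hb
  have hssub : s ⊆ Finset.range (m + 1) := fun i hi =>
    Finset.mem_range.mpr (Nat.lt_succ_of_le (Finset.le_sup (f := id) hi))
  have hb₀ : ∀ i, 0 ≤ b i := by
    intro i; simp only [hb]; split
    · exact hw₀ i ‹_›
    · exact le_rfl
  have hbsum : ∑ i ∈ Finset.range (m + 1), b i = 1 := by
    rw [← hw₁]
    refine (Finset.sum_subset hssub ?_).symm.trans ?_
    · intro i _ hi; simp [hb, hi]
    · exact Finset.sum_congr rfl fun i hi => by simp [hb, hi]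
  have hbval : ∑ i ∈ Finset.range (m + 1), b i • (T ^ i) x₀ = y := by
    rw [← hwy]
    refine (Finset.sum_subset hssub ?_).symm.trans ?_
    · intro i _ hi; simp [hb, hi]
    · exact Finset.sum_congr rfl fun i hi => by simp [hb, hi]
  -- pick k and δ
  set k : ℕ := max N₀ m + 1 with hk
  have hkN : N₀ < k := Nat.lt_succ_of_le (le_max_left _ _)
  have hkm : m < k := Nat.lt_succ_of_le (le_max_right _ _)
  set C : ℝ := ‖(T ^ k) x₀ - y‖ with hC
  have hr : 0 < ε - ‖y - x‖ := by linarith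
  set δ : ℝ := min 1 ((ε - ‖y - x‖) / (2 * (C + 1))) with hδ
  have hCpos : 0 < C + 1 := by positivity
  have hδpos : 0 < δ := lt_min one_pos (by positivity)
  have hδ1 : δ ≤ 1 := min_le_left _ _
  have hδC : δ * C < ε - ‖y - x‖ := by
    have h1 : δ * C ≤ (ε - ‖y - x‖) / (2 * (C + 1)) * C :=
      mul_le_mul_of_nonneg_right (min_le_right _ _) (norm_nonneg _)
    have h2 : (ε - ‖y - x‖) / (2 * (C + 1)) * C < ε - ‖y - x‖ := by
      rw [div_mul_eq_mul_div, div_lt_iff₀ (by positivity)]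
      nlinarith [norm_nonneg ((T ^ k) x₀ - y)]
    linarith
  -- define a
  set a : ℕ → ℝ := fun i =>
    (if i = k then δ else 0) + (1 - δ) * (if i ∈ Finset.range (m + 1) then b i else 0) with ha
  refine ⟨k, a, hkN, ?_, ?_, ?_, ?_⟩
  · intro i
    refine add_nonneg ?_ (mul_nonneg (by linarith) ?_)
    · split <;> [exact le_of_lt hδpos; exact le_refl 0]
    · split <;> [exact hb₀ i; exact le_refl 0]
  · have hrsub : Finset.range (m + 1) ⊆ Finset.range (k + 1) :=
      Finset.range_subset_range.mpr (by omega)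
    simp only [ha, Finset.sum_add_distrib]
    rw [Finset.sum_ite_eq' (Finset.range (k + 1)) k (fun _ => δ)]
    rw [if_pos (Finset.mem_range.mpr (Nat.lt_succ_self k))]
    rw [← Finset.mul_sum]
    rw [← Finset.sum_subset hrsub (fun i _ hi => by rw [if_neg hi])]
    rw [Finset.sum_congr rfl fun i hi => if_pos hi, hbsum]
    ring
  · have : a k = δ + (1 - δ) * (if k ∈ Finset.range (m + 1) then b k else 0) := by
      simp [ha]
    rw [this, if_neg (by simp; omega)]
    simpa using hδpos
  · have happ : (∑ i ∈ Finset.range (k + 1), (a i : ℂ) • (T ^ i)) x₀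
        = ∑ i ∈ Finset.range (k + 1), a i • (T ^ i) x₀ := by
      rw [ContinuousLinearMap.sum_apply]
      exact Finset.sum_congr rfl fun i _ => by
        rw [ContinuousLinearMap.smul_apply, Complex.coe_smul]
    rw [happ]
    have hsplit : ∑ i ∈ Finset.range (k + 1), a i • (T ^ i) x₀
        = δ • (T ^ k) x₀ + (1 - δ) • y := by
      simp only [ha, add_smul, Finset.sum_add_distrib]
      congr 1
      · rw [Finset.sum_congr rfl (fun i _ => by rw [ite_smul, zero_smul]),
          Finset.sum_ite_eq' (Finset.range (k + 1)) k fun i => δ • (T ^ i) x₀]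
        rw [if_pos (Finset.mem_range.mpr (Nat.lt_succ_self k))]
      · have hrsub : Finset.range (m + 1) ⊆ Finset.range (k + 1) :=
          Finset.range_subset_range.mpr (by omega)
        rw [← hbval, Finset.smul_sum]
        rw [← Finset.sum_subset hrsub (fun i _ hi => by rw [if_neg hi, mul_zero, zero_smul])]
        exact Finset.sum_congr rfl fun i hi => by rw [if_pos hi, mul_smul]
    rw [hsplit]
    have key : δ • (T ^ k) x₀ + (1 - δ) • y - x = δ • ((T ^ k) x₀ - y) + (y - x) := by
      rw [smul_sub, sub_smul, one_smul]; abel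
    rw [key]
    calc ‖δ • ((T ^ k) x₀ - y) + (y - x)‖ ≤ ‖δ • ((T ^ k) x₀ - y)‖ + ‖y - x‖ := norm_add_le _ _
      _ = δ * C + ‖y - x‖ := by rw [norm_smul, Real.norm_of_nonneg (le_of_lt hδpos)]
      _ < ε := by linarith
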